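/- Let K ⊆ ℝ^n be a superdual proper cone and let A ∈ ℝ^{n×n} be symmetric. If A satisfies condition (M) for K, then A has the K-Z-property, i.e., ⟨Ax,y⟩ ≤ 0 for all x ∈ K and y ∈ K* with ⟨x,y⟩ = 0. -/

import Mathlib

open Matrix RealInnerProductSpace

/-- `K ⊆ ℝⁿ` is a proper cone: a closed convex cone which is pointed and has
nonempty interior. -/
def IsProperCone {n : ℕ} (K : Set (EuclideanSpace ℝ (Fin n))) : Prop :=
  IsClosed K ∧ Convex ℝ K ∧ (∀ (t : ℝ), 0 ≤ t → ∀ x ∈ K, t • x ∈ K) ∧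
    K ∩ (-K) = {0} ∧ (interior K).Nonempty

/-- The dual cone `K* = {x : ⟨x,y⟩ ≥ 0 for all y ∈ K}`. -/
def dualCone {n : ℕ} (K : Set (EuclideanSpace ℝ (Fin n))) :
    Set (EuclideanSpace ℝ (Fin n)) :=
  {x | ∀ y ∈ K, 0 ≤ ⟪x, y⟫}

/-- Condition (M): `⟨Ax,x⟩ ≥ ⟨Ay,y⟩` for all `x ∈ 𝕊` and `y ∈ K ∩ 𝕊` with `x ⊥ y`. -/
def CondM {n : ℕ} (A : Matrix (Fin n) (Fin n) ℝ) (K : Set (EuclideanSpace ℝ (Fin n))) : Prop :=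
  ∀ x y : EuclideanSpace ℝ (Fin n), ‖x‖ = 1 → y ∈ K → ‖y‖ = 1 → ⟪x, y⟫ = 0 →
    ⟪Matrix.toEuclideanLin A y, y⟫ ≤ ⟪Matrix.toEuclideanLin A x, x⟫

/-- For a superdual proper cone `K` and symmetric `A` satisfying condition (M),
the matrix `A` has the K-Z-property: `⟨Ax,y⟩ ≤ 0` whenever `x ∈ K`, `y ∈ K*`, `x ⊥ y`. -/
theorem quadratic_spherical_stmt4 (n : ℕ) (hn : 1 ≤ n)
    (K : Set (EuclideanSpace ℝ (Fin n))) (hK : IsProperCone K)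
    (hsuper : dualCone K ⊆ K)
    (A : Matrix (Fin n) (Fin n) ℝ) (hA : A.IsSymm) (hM : CondM A K) :
    ∀ x y : EuclideanSpace ℝ (Fin n), x ∈ K → y ∈ dualCone K → ⟪x, y⟫ = 0 →
      ⟪Matrix.toEuclideanLin A x, y⟫ ≤ 0 := by
  intro x y hx hy hxy
  obtain ⟨_, hconv, hscale, _, _⟩ := hK
  set B := Matrix.toEuclideanLin A with hB
  have hsym : ∀ u v : EuclideanSpace ℝ (Fin n), ⟪B u, v⟫ = ⟪u, B v⟫ := by
    have : A.IsHermitian := by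
      rwa [Matrix.IsHermitian, Matrix.conjTranspose_eq_transpose_of_trivial]
    exact Matrix.isHermitian_iff_isSymmetric.mp this
  by_cases hx0 : x = 0
  · simp [hx0]
  by_cases hy0 : y = 0
  · simp [hy0]
  have hyK : y ∈ K := hsuper hy
  have hxn : (0:ℝ) < ‖x‖ := norm_pos_iff.mpr hx0
  have hyn : (0:ℝ) < ‖y‖ := norm_pos_iff.mpr hy0
  set u : EuclideanSpace ℝ (Fin n) := ‖x‖⁻¹ • x with hu
  set v : EuclideanSpace ℝ (Fin n) := ‖y‖⁻¹ • y with hv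
  have huK : u ∈ K := hscale _ (by positivity) _ hx
  have hvK : v ∈ K := hscale _ (by positivity) _ hyK
  have hunorm : ‖u‖ = 1 := by rw [hu, norm_smul, norm_inv, norm_norm, inv_mul_cancel₀ hxn.ne']
  have hvnorm : ‖v‖ = 1 := by rw [hv, norm_smul, norm_inv, norm_norm, inv_mul_cancel₀ hyn.ne']
  have huv : ⟪u, v⟫ = 0 := by
    rw [hu, hv, real_inner_smul_left, real_inner_smul_right, hxy]; ring
  have hvu0 : ⟪v, u⟫ = 0 := by rw [real_inner_comm]; exact huv
  -- p = (u+v)/√2 ∈ K, q = (v-u)/√2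
  have hs2 : (0:ℝ) < Real.sqrt 2 := by positivity
  set p : EuclideanSpace ℝ (Fin n) := (Real.sqrt 2)⁻¹ • (u + v) with hp
  set q : EuclideanSpace ℝ (Fin n) := (Real.sqrt 2)⁻¹ • (v - u) with hq
  have haddK : u + v ∈ K := by
    have h := hconv huK hvK (by norm_num : (0:ℝ) ≤ 1/2) (by norm_num : (0:ℝ) ≤ 1/2)
      (by norm_num)
    have h2 := hscale 2 (by norm_num) _ h
    have : (2:ℝ) • ((1/2:ℝ) • u + (1/2:ℝ) • v) = u + v := by
      module
    rwa [this] at h2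
  have hpK : p ∈ K := hscale _ (by positivity) _ haddK
  have hnuv : ‖u + v‖ ^ 2 = 2 := by
    rw [← real_inner_self_eq_norm_sq, inner_add_add_self, huv, hvu0, real_inner_self_eq_norm_sq,
      real_inner_self_eq_norm_sq, hunorm, hvnorm]; ring
  have hnvu : ‖v - u‖ ^ 2 = 2 := by
    rw [← real_inner_self_eq_norm_sq, inner_sub_sub_self, huv, hvu0,
      real_inner_self_eq_norm_sq, real_inner_self_eq_norm_sq, hunorm, hvnorm]; ring
  have hpnorm : ‖p‖ = 1 := by
    rw [hp, norm_smul, Real.norm_eq_abs, abs_of_pos (by positivity)]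
    have : ‖u + v‖ = Real.sqrt 2 := by
      rw [← Real.sqrt_sq (norm_nonneg _), hnuv]
    rw [this]; field_simp
  have hqnorm : ‖q‖ = 1 := by
    rw [hq, norm_smul, Real.norm_eq_abs, abs_of_pos (by positivity)]
    have : ‖v - u‖ = Real.sqrt 2 := by
      rw [← Real.sqrt_sq (norm_nonneg _), hnvu]
    rw [this]; field_simp
  have hqp : ⟪q, p⟫ = 0 := by
    rw [hq, hp, real_inner_smul_left, real_inner_smul_right, inner_sub_left, inner_add_right,
      inner_add_right, huv, hvu0, real_inner_self_eq_norm_sq,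
      real_inner_self_eq_norm_sq, hunorm, hvnorm]
    ring
  have key := hM q p hqnorm hpK hpnorm hqp
  -- expand
  have hvu : ⟪B v, u⟫ = ⟪B u, v⟫ := by
    rw [hsym v u, real_inner_comm]
  have hc : ⟪B u, v⟫ ≤ 0 := by
    have hlhs : ⟪B p, p⟫ = (Real.sqrt 2)⁻¹ ^ 2 *
        (⟪B u, u⟫ + ⟪B v, v⟫ + 2 * ⟪B u, v⟫) := by
      rw [hp, _root_.map_smul, real_inner_smul_left, real_inner_smul_right, map_add, inner_add_left,
        inner_add_right, inner_add_right, hvu]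
      ring
    have hrhs : ⟪B q, q⟫ = (Real.sqrt 2)⁻¹ ^ 2 *
        (⟪B u, u⟫ + ⟪B v, v⟫ - 2 * ⟪B u, v⟫) := by
      rw [hq, _root_.map_smul, real_inner_smul_left, real_inner_smul_right, map_sub, inner_sub_left,
        inner_sub_right, inner_sub_right, hvu]
      ring
    have h2 : (Real.sqrt 2)⁻¹ ^ 2 = (2:ℝ)⁻¹ := by
      rw [inv_pow, Real.sq_sqrt (by norm_num : (2:ℝ) ≥ 0)]
    rw [hlhs, hrhs, h2] at key
    linarith
  have huvxy : ⟪B u, v⟫ = ‖x‖⁻¹ * (‖y‖⁻¹ * ⟪B x, y⟫) := by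
    rw [hu, hv, _root_.map_smul, real_inner_smul_left, real_inner_smul_right]
  rw [huvxy] at hc
  have h1 : (0:ℝ) < ‖x‖⁻¹ * ‖y‖⁻¹ := by positivity
  nlinarith [hc]
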